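/- Let μ be a probability measure on ℝ^d, r > 0 and s > 0. Then the map z ↦ SD^r_s(z|μ) is Lipschitz on ℝ^d: there is a finite constant L' (depending only on r and s) such that |SD^r_s(z|μ) − SD^r_s(z'|μ)| ≤ L'·‖z − z'‖ for all z, z' ∈ ℝ^d. -/
import Mathlib

open MeasureTheory

/-- The sigmoid function with scale `s`. -/
noncomputable def sig (s t : ℝ) : ℝ := 1 / (1 + Real.exp (-t / s))

/-- The (smoothed, `s > 0`) sphere depth
`SD^r_s(z|μ) = inf_{‖c−z‖=r} ∫ sig_s(r² − ‖x − c‖²) dμ(x)`. -/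
noncomputable def SDs (d : ℕ) (r s : ℝ) (z : EuclideanSpace ℝ (Fin d))
    (μ : Measure (EuclideanSpace ℝ (Fin d))) : ℝ :=
  ⨅ c : Metric.sphere z r, ∫ x, sig s (r ^ 2 - ‖x - (c : EuclideanSpace ℝ (Fin d))‖ ^ 2) ∂μ

lemma one_add_exp_pos (t : ℝ) : 0 < 1 + Real.exp t := by positivity

lemma sig_nonneg (s t : ℝ) : 0 ≤ sig s t := by
  unfold sig; positivity

lemma sig_le_one (s t : ℝ) : sig s t ≤ 1 := by
  unfold sig
  rw [div_le_one (one_add_exp_pos _)]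
  nlinarith [Real.exp_pos (-t/s)]

/-- Key analytic lemma: `u ↦ sig s (r² - u²)` is Lipschitz with constant
`(2/√s) * exp(r²/s)`. -/
lemma sig_sq_lipschitz {r s : ℝ} (hs : 0 < s) (a b : ℝ) :
    |sig s (r ^ 2 - a ^ 2) - sig s (r ^ 2 - b ^ 2)|
      ≤ (2 / Real.sqrt s * Real.exp (r ^ 2 / s)) * |a - b| := by
  set L : ℝ := 2 / Real.sqrt s * Real.exp (r ^ 2 / s) with hL
  set g : ℝ → ℝ := fun u => (1 + Real.exp ((u ^ 2 - r ^ 2) / s))⁻¹ with hgdef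
  have hg : ∀ u : ℝ, sig s (r ^ 2 - u ^ 2) = g u := by
    intro u
    have : -(r ^ 2 - u ^ 2) / s = (u ^ 2 - r ^ 2) / s := by ring
    simp [sig, g, this, one_div]
  have hderiv : ∀ u : ℝ, HasDerivAt g
      (-(Real.exp ((u ^ 2 - r ^ 2) / s) * (2 * u / s))
        / (1 + Real.exp ((u ^ 2 - r ^ 2) / s)) ^ 2) u := by
    intro u
    have h1 : HasDerivAt (fun u : ℝ => (u ^ 2 - r ^ 2) / s) (2 * u / s) u := by
      have := ((hasDerivAt_pow 2 u).sub_const (r ^ 2)).div_const s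
      simpa using this
    have h2 := h1.exp
    have h3 := h2.const_add 1
    exact h3.inv (ne_of_gt (one_add_exp_pos _))
  have hbound : ∀ u : ℝ,
      ‖-(Real.exp ((u ^ 2 - r ^ 2) / s) * (2 * u / s))
        / (1 + Real.exp ((u ^ 2 - r ^ 2) / s)) ^ 2‖ ≤ L := by
    intro u
    have hE : 0 < Real.exp ((u ^ 2 - r ^ 2) / s) := Real.exp_pos _
    have hs' : 0 < Real.sqrt s := Real.sqrt_pos.2 hs
    have hss : Real.sqrt s * Real.sqrt s = s := Real.mul_self_sqrt hs.le
    rw [Real.norm_eq_abs, abs_div, abs_neg, abs_mul]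
    have hE2 : |(1 + Real.exp ((u ^ 2 - r ^ 2) / s)) ^ 2|
        = (1 + Real.exp ((u ^ 2 - r ^ 2) / s)) ^ 2 := abs_of_pos (by positivity)
    rw [hE2, abs_of_pos hE]
    -- step 1: bound by exp(-w) * (2|u|/s)
    have step1 : Real.exp ((u ^ 2 - r ^ 2) / s) * |2 * u / s|
          / (1 + Real.exp ((u ^ 2 - r ^ 2) / s)) ^ 2
        ≤ Real.exp (-((u ^ 2 - r ^ 2) / s)) * (2 * |u| / s) := by
      rw [div_le_iff₀ (by positivity), Real.exp_neg]
      have habs : |2 * u / s| = 2 * |u| / s := by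
        rw [abs_div, abs_mul, abs_of_pos hs]; simp
      rw [habs]
      have hsq : (Real.exp ((u ^ 2 - r ^ 2) / s)) ^ 2
          ≤ (1 + Real.exp ((u ^ 2 - r ^ 2) / s)) ^ 2 := by nlinarith
      have h5 : Real.exp ((u ^ 2 - r ^ 2) / s)
          ≤ (Real.exp ((u ^ 2 - r ^ 2) / s))⁻¹ * (1 + Real.exp ((u ^ 2 - r ^ 2) / s)) ^ 2 := by
        rw [le_inv_mul_iff₀ hE, ← sq]
        exact hsq
      have h4 := mul_le_mul_of_nonneg_right h5 (show (0:ℝ) ≤ 2 * |u| / s by positivity)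
      calc Real.exp ((u ^ 2 - r ^ 2) / s) * (2 * |u| / s)
          ≤ (Real.exp ((u ^ 2 - r ^ 2) / s))⁻¹ * (1 + Real.exp ((u ^ 2 - r ^ 2) / s)) ^ 2
              * (2 * |u| / s) := h4
        _ = (Real.exp ((u ^ 2 - r ^ 2) / s))⁻¹ * (2 * |u| / s)
              * (1 + Real.exp ((u ^ 2 - r ^ 2) / s)) ^ 2 := by ring
    refine step1.trans ?_
    -- step 2: exp(-(u²-r²)/s) * (2|u|/s) ≤ L
    have hsplit : Real.exp (-((u ^ 2 - r ^ 2) / s))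
        = Real.exp (r ^ 2 / s) * Real.exp (-(u ^ 2) / s) := by
      rw [← Real.exp_add]; ring_nf
    rw [hsplit, hL]
    have key : |u| * Real.exp (-(u ^ 2) / s) ≤ Real.sqrt s := by
      have h1 : |u| ≤ Real.sqrt s * Real.exp (u ^ 2 / s) := by
        have h2 : 1 + u ^ 2 / s ≤ Real.exp (u ^ 2 / s) := by
          have := Real.add_one_le_exp (u ^ 2 / s); linarith
        have hm : |u| * Real.sqrt s ≤ s + u ^ 2 := by
          nlinarith [sq_nonneg (Real.sqrt s - |u|), sq_abs u]
        have h3 : |u| ≤ Real.sqrt s * (1 + u ^ 2 / s) := by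
          have hgoal : |u| * Real.sqrt s ≤ Real.sqrt s * (1 + u ^ 2 / s) * Real.sqrt s := by
            have e1 : Real.sqrt s * (1 + u ^ 2 / s) * Real.sqrt s = s + u ^ 2 := by
              field_simp
              nlinarith [hss]
            rw [e1]; exact hm
          exact le_of_mul_le_mul_right hgoal hs'
        refine h3.trans ?_
        exact mul_le_mul_of_nonneg_left h2 hs'.le
      calc |u| * Real.exp (-(u ^ 2) / s)
          ≤ Real.sqrt s * Real.exp (u ^ 2 / s) * Real.exp (-(u ^ 2) / s) :=
            mul_le_mul_of_nonneg_right h1 (Real.exp_pos _).le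
        _ = Real.sqrt s := by
            rw [mul_assoc, ← Real.exp_add]; ring_nf; simp
    have hrw : Real.exp (r ^ 2 / s) * Real.exp (-(u ^ 2) / s) * (2 * |u| / s)
        = (|u| * Real.exp (-(u ^ 2) / s)) * (2 * Real.exp (r ^ 2 / s) / s) := by ring
    rw [hrw]
    have h2s : 0 ≤ 2 * Real.exp (r ^ 2 / s) / s := by positivity
    calc (|u| * Real.exp (-(u ^ 2) / s)) * (2 * Real.exp (r ^ 2 / s) / s)
        ≤ Real.sqrt s * (2 * Real.exp (r ^ 2 / s) / s) :=
          mul_le_mul_of_nonneg_right key h2s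
      _ = 2 / Real.sqrt s * Real.exp (r ^ 2 / s) := by
          field_simp
          nlinarith [hss, Real.exp_pos (r ^ 2 / s)]
  have := Convex.norm_image_sub_le_of_norm_deriv_le
    (fun u (_ : u ∈ Set.univ) => (hderiv u).differentiableAt)
    (fun x _ => by rw [(hderiv x).deriv]; exact hbound x)
    convex_univ (Set.mem_univ b) (Set.mem_univ a)
  rw [hg a, hg b]
  simpa [Real.norm_eq_abs] using this

lemma sig_continuous {s : ℝ} (hs : 0 < s) (d : ℕ) (r : ℝ) (c : EuclideanSpace ℝ (Fin d)) :
    Continuous (fun x : EuclideanSpace ℝ (Fin d) => sig s (r ^ 2 - ‖x - c‖ ^ 2)) := by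
  unfold sig
  refine Continuous.div continuous_const ?_ (fun x => ne_of_gt (one_add_exp_pos _))
  fun_prop

lemma integrand_integrable {s : ℝ} (hs : 0 < s) (d : ℕ) (r : ℝ)
    (μ : Measure (EuclideanSpace ℝ (Fin d))) [IsProbabilityMeasure μ]
    (c : EuclideanSpace ℝ (Fin d)) :
    Integrable (fun x => sig s (r ^ 2 - ‖x - c‖ ^ 2)) μ := by
  refine Integrable.mono' (integrable_const 1)
    ((sig_continuous hs d r c).aestronglyMeasurable) (ae_of_all _ fun x => ?_)
  rw [Real.norm_eq_abs, abs_of_nonneg (sig_nonneg _ _)]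
  exact sig_le_one _ _

/-- The integral is Lipschitz in the center `c`. -/
lemma integral_lipschitz {r s : ℝ} (hs : 0 < s) (d : ℕ)
    (μ : Measure (EuclideanSpace ℝ (Fin d))) [IsProbabilityMeasure μ]
    (c c' : EuclideanSpace ℝ (Fin d)) :
    |(∫ x, sig s (r ^ 2 - ‖x - c‖ ^ 2) ∂μ) - ∫ x, sig s (r ^ 2 - ‖x - c'‖ ^ 2) ∂μ|
      ≤ (2 / Real.sqrt s * Real.exp (r ^ 2 / s)) * ‖c - c'‖ := by
  set L : ℝ := 2 / Real.sqrt s * Real.exp (r ^ 2 / s) with hL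
  have hLpos : 0 ≤ L := by positivity
  have hf := integrand_integrable hs d r μ c
  have hg := integrand_integrable hs d r μ c'
  rw [← integral_sub hf hg]
  have hbound : ∀ x : EuclideanSpace ℝ (Fin d),
      |sig s (r ^ 2 - ‖x - c‖ ^ 2) - sig s (r ^ 2 - ‖x - c'‖ ^ 2)| ≤ L * ‖c - c'‖ := by
    intro x
    refine (sig_sq_lipschitz hs ‖x - c‖ ‖x - c'‖).trans ?_
    refine mul_le_mul_of_nonneg_left ?_ hLpos
    have := abs_norm_sub_norm_le (x - c) (x - c')
    have heq : (x - c) - (x - c') = c' - c := by abel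
    rw [heq] at this
    rwa [norm_sub_rev c c']
  calc |∫ x, (sig s (r ^ 2 - ‖x - c‖ ^ 2) - sig s (r ^ 2 - ‖x - c'‖ ^ 2)) ∂μ|
      ≤ ∫ x, |sig s (r ^ 2 - ‖x - c‖ ^ 2) - sig s (r ^ 2 - ‖x - c'‖ ^ 2)| ∂μ := by
        simpa [Real.norm_eq_abs] using
          norm_integral_le_integral_norm
            (fun x => sig s (r ^ 2 - ‖x - c‖ ^ 2) - sig s (r ^ 2 - ‖x - c'‖ ^ 2)) (μ := μ)
    _ ≤ ∫ _x, L * ‖c - c'‖ ∂μ :=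
        integral_mono ((hf.sub hg).abs) (integrable_const _) (fun x => hbound x)
    _ = L * ‖c - c'‖ := by simp

/-- The map `z ↦ SD^r_s(z|μ)` is Lipschitz, with constant depending only on `r` and `s`. -/
theorem stmt_13 (d : ℕ) (r s : ℝ) (hr : 0 < r) (hs : 0 < s) :
    ∃ L : ℝ, ∀ (μ : Measure (EuclideanSpace ℝ (Fin d))), IsProbabilityMeasure μ →
      ∀ z z' : EuclideanSpace ℝ (Fin d),
        |SDs d r s z μ - SDs d r s z' μ| ≤ L * ‖z - z'‖ := by
  set L : ℝ := 2 / Real.sqrt s * Real.exp (r ^ 2 / s) with hL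
  have hLpos : 0 ≤ L := by positivity
  refine ⟨L, fun μ hμ z z' => ?_⟩
  haveI := hμ
  -- translation map between spheres
  have htrans : ∀ (w w' : EuclideanSpace ℝ (Fin d)) (c : Metric.sphere w r),
      (c : EuclideanSpace ℝ (Fin d)) + w' - w ∈ Metric.sphere w' r := by
    intro w w' c
    have hc : dist (c : EuclideanSpace ℝ (Fin d)) w = r := c.2
    rw [mem_sphere_iff_norm]
    rw [dist_eq_norm] at hc
    have : (c : EuclideanSpace ℝ (Fin d)) + w' - w - w'
        = (c : EuclideanSpace ℝ (Fin d)) - w := by abel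
    rw [this, hc]
  have hbdd : ∀ w : EuclideanSpace ℝ (Fin d), BddBelow (Set.range fun c : Metric.sphere w r =>
      ∫ x, sig s (r ^ 2 - ‖x - (c : EuclideanSpace ℝ (Fin d))‖ ^ 2) ∂μ) := by
    intro w
    refine ⟨0, fun y hy => ?_⟩
    obtain ⟨c, rfl⟩ := hy
    exact integral_nonneg fun x => sig_nonneg _ _
  -- one-sided inequality
  have key : ∀ w w' : EuclideanSpace ℝ (Fin d),
      SDs d r s w μ ≤ SDs d r s w' μ + L * ‖w - w'‖ := by
    intro w w'
    by_cases hne : Nonempty (Metric.sphere w' r)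
    · have hne' : Nonempty (Metric.sphere w r) := by
        obtain ⟨c⟩ := hne
        exact ⟨⟨(c : EuclideanSpace ℝ (Fin d)) + w - w', htrans w' w c⟩⟩
      rw [SDs, SDs, ← sub_le_iff_le_add]
      refine le_ciInf fun c' => ?_
      rw [sub_le_iff_le_add]
      set c : Metric.sphere w r :=
        ⟨(c' : EuclideanSpace ℝ (Fin d)) + w - w', htrans w' w c'⟩ with hc
      calc (⨅ c : Metric.sphere w r,
            ∫ x, sig s (r ^ 2 - ‖x - (c : EuclideanSpace ℝ (Fin d))‖ ^ 2) ∂μ)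
          ≤ ∫ x, sig s (r ^ 2 - ‖x - (c : EuclideanSpace ℝ (Fin d))‖ ^ 2) ∂μ :=
            ciInf_le (hbdd w) c
        _ ≤ (∫ x, sig s (r ^ 2 - ‖x - (c' : EuclideanSpace ℝ (Fin d))‖ ^ 2) ∂μ)
              + L * ‖w - w'‖ := by
            have h1 := integral_lipschitz (r := r) hs d μ
              (c : EuclideanSpace ℝ (Fin d)) (c' : EuclideanSpace ℝ (Fin d))
            have heq : (c : EuclideanSpace ℝ (Fin d)) - (c' : EuclideanSpace ℝ (Fin d))
                = w - w' := by
              simp only [hc]; abel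
            rw [heq] at h1
            have := abs_le.1 h1
            rw [hL]
            linarith [this.2]
    · have hne' : IsEmpty (Metric.sphere w r) := by
        by_contra h
        rw [not_isEmpty_iff] at h
        obtain ⟨c⟩ := h
        exact hne ⟨⟨(c : EuclideanSpace ℝ (Fin d)) + w' - w, htrans w w' c⟩⟩
      haveI := hne'
      haveI : IsEmpty (Metric.sphere w' r) := not_nonempty_iff.1 hne
      rw [SDs, SDs, Real.iInf_of_isEmpty, Real.iInf_of_isEmpty]
      have : 0 ≤ L * ‖w - w'‖ := by positivity
      linarith
  have h1 := key z z'
  have h2 := key z' z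
  rw [norm_sub_rev] at h2
  rw [abs_sub_le_iff]
  constructor <;> linarith
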